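/- Let β > α > 0 and r ∈ ℝ with |r| ≠ √(αβ). Then the minimizer of w ↦ (1/(2β))(r − w)² + ρ_α(w) over ℝ is unique and given by the hard thresholding operator: 0 if |r| < √(αβ) and r if |r| > √(αβ). -/

import Mathlib

noncomputable def mcp (α w : ℝ) : ℝ :=
  if |w| ≤ α then |w| - w ^ 2 / (2 * α) else α / 2

theorem prox_mcp_hard (α β : ℝ) (hα : 0 < α) (hαβ : α < β) (r : ℝ)
    (hr : |r| ≠ Real.sqrt (α * β)) :
    {w : ℝ | ∀ v : ℝ, 1 / (2 * β) * (r - w) ^ 2 + mcp α w ≤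
        1 / (2 * β) * (r - v) ^ 2 + mcp α v} =
      {if |r| < Real.sqrt (α * β) then 0 else r} := by
  have hβ : 0 < β := hα.trans hαβ
  set s := Real.sqrt (α * β) with hsdef
  have hs2 : s ^ 2 = α * β := Real.sq_sqrt (by positivity)
  have hs0 : 0 < s := Real.sqrt_pos.2 (by positivity)
  have hαs : α < s := by nlinarith
  rcases lt_or_gt_of_ne hr with hlt | hgt
  · -- |r| < s, minimizer 0
    rw [if_pos hlt]
    have hr2 : r ^ 2 < α * β := by nlinarith [sq_abs r, abs_nonneg r]
    have h0 : mcp α 0 = 0 := by simp [mcp, hα.le]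
    have hstrict : ∀ v : ℝ, v ≠ 0 →
        1 / (2 * β) * (r - 0) ^ 2 + mcp α 0 < 1 / (2 * β) * (r - v) ^ 2 + mcp α v := by
      intro v hv
      rw [h0, sub_zero]
      unfold mcp
      split_ifs with hv2
      · have habs : 0 < |v| := abs_pos.2 hv
        have hrv : r * v ≤ |r| * |v| := (le_abs_self _).trans (abs_mul r v).le
        have hvv : v ^ 2 = |v| ^ 2 := (sq_abs v).symm
        have h2r : 2 * |r| < α + β := by nlinarith [sq_abs r, abs_nonneg r, sq_nonneg (α - β)]
        have hkey : 1 / (2 * β) * (r - v) ^ 2 + (|v| - v ^ 2 / (2 * α)) - (1 / (2 * β) * r ^ 2 + 0)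
            = (α * (r - v) ^ 2 + 2 * α * β * |v| - β * v ^ 2 - α * r ^ 2) / (2 * α * β) := by
          field_simp; ring
        have hnum : 0 < α * (r - v) ^ 2 + 2 * α * β * |v| - β * v ^ 2 - α * r ^ 2 := by
          nlinarith [mul_pos hα habs, mul_le_mul_of_nonneg_left hrv hα.le,
            mul_le_mul_of_nonneg_right hv2 (abs_nonneg v), mul_pos habs habs]
        have := div_pos hnum (by positivity : (0:ℝ) < 2 * α * β)
        linarith [hkey ▸ this]
      · have hnum : 0 < (r - v) ^ 2 + α * β - r ^ 2 := by nlinarith [sq_nonneg (v - r)]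
        have hkey : 1 / (2 * β) * (r - v) ^ 2 + α / 2 - (1 / (2 * β) * r ^ 2 + 0)
            = ((r - v) ^ 2 + α * β - r ^ 2) / (2 * β) := by field_simp; ring
        have := div_pos hnum (by positivity : (0:ℝ) < 2 * β)
        linarith [hkey ▸ this]
    ext w
    simp only [Set.mem_setOf_eq, Set.mem_singleton_iff]
    constructor
    · intro h
      by_contra hw
      exact absurd (h 0) (not_le.2 (by simpa using hstrict w hw))
    · rintro rfl v
      rcases eq_or_ne v 0 with rfl | hv
      · exact le_refl _
      · simpa using (hstrict v hv).le
  · -- |r| > s, minimizer r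
    rw [if_neg (not_lt.2 hgt.le)]
    have hrα : α < |r| := hαs.trans hgt
    have hmr : mcp α r = α / 2 := by simp [mcp, not_le.2 hrα]
    have hstrict : ∀ v : ℝ, v ≠ r →
        1 / (2 * β) * (r - r) ^ 2 + mcp α r < 1 / (2 * β) * (r - v) ^ 2 + mcp α v := by
      intro v hv
      rw [hmr, sub_self]
      unfold mcp
      split_ifs with hv2
      · -- |v| ≤ α
        set a := Real.sqrt α with hadef
        set b := Real.sqrt β with hbdef
        have ha2 : a ^ 2 = α := Real.sq_sqrt hα.le
        have hb2 : b ^ 2 = β := Real.sq_sqrt hβ.le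
        have ha0 : 0 ≤ a := Real.sqrt_nonneg _
        have hb0 : 0 ≤ b := Real.sqrt_nonneg _
        have hab : a ≤ b := Real.sqrt_le_sqrt hαβ.le
        have hsab : s = a * b := Real.sqrt_mul hα.le β
        have h1 : s - |v| < |r - v| := by
          have := abs_sub_abs_le_abs_sub r v
          linarith
        have h1' : 0 ≤ s - |v| := by linarith [hv2]
        have h2 : (s - |v|) ^ 2 < (r - v) ^ 2 := by
          calc (s - |v|) ^ 2 < |r - v| ^ 2 := by
                exact pow_lt_pow_left₀ h1 h1' (by norm_num)
            _ = (r - v) ^ 2 := sq_abs _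
        have has : a * s = α * b := by rw [hsab, ← ha2]; ring
        have h3 : b * (α - |v|) ≤ a * (s - |v|) := by
          nlinarith [mul_nonneg (sub_nonneg.2 hab) (abs_nonneg v)]
        have h4 : 0 ≤ b * (α - |v|) := mul_nonneg hb0 (by linarith)
        have h5 : (b * (α - |v|)) ^ 2 ≤ (a * (s - |v|)) ^ 2 := pow_le_pow_left₀ h4 h3 2
        rw [mul_pow, mul_pow, ha2, hb2] at h5
        have h7 : α * (s - |v|) ^ 2 < α * (r - v) ^ 2 := mul_lt_mul_of_pos_left h2 hα
        have hv2' : v ^ 2 = |v| ^ 2 := (sq_abs v).symm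
        have hnum : 0 < α * (r - v) ^ 2 - β * (α - |v|) ^ 2 := by linarith [h5, h7]
        have hkey : 1 / (2 * β) * (r - v) ^ 2 + (|v| - v ^ 2 / (2 * α)) - (1 / (2 * β) * 0 ^ 2 + α / 2)
            = (α * (r - v) ^ 2 - β * (α - |v|) ^ 2) / (2 * α * β) := by
          field_simp
          linear_combination (-β) * hv2'
        have := div_pos hnum (by positivity : (0:ℝ) < 2 * α * β)
        linarith [hkey ▸ this]
      · have hrv : r - v ≠ 0 := sub_ne_zero.2 (Ne.symm hv)
        have h2 : 0 < (r - v) ^ 2 := lt_of_le_of_ne (sq_nonneg _) (Ne.symm (pow_ne_zero 2 hrv))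
        have := mul_pos (by positivity : (0:ℝ) < 1 / (2 * β)) h2
        nlinarith
    ext w
    simp only [Set.mem_setOf_eq, Set.mem_singleton_iff]
    constructor
    · intro h
      by_contra hw
      exact absurd (h r) (not_le.2 (by simpa using hstrict w hw))
    · rintro rfl v
      rcases eq_or_ne v w with rfl | hv
      · exact le_refl _
      · simpa using (hstrict v hv).le
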